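/- Exponential tail for the length of the conditioned walk: For 0 < λ < 1/2 there exist constants c, C > 0 such that for every N ≥ 1 and every t ≥ 0, P_λ^{N²}[|Γ| ≥ tN] ≤ C·e^{−cN(t − 2√2)}, where P_λ^{N²} = P_λ[· | A(Γ) ≥ N²] is the area-conditioned measure. -/

import Mathlib

def IsStep (p q : ℤ × ℤ) : Prop := q = (p.1 + 1, p.2) ∨ q = (p.1, p.2 - 1)

def IsPathFun (n : ℕ) (γ : ℕ → ℤ × ℤ) : Prop :=
  (∀ k, k < n → IsStep (γ k) (γ (k + 1))) ∧ ∀ k, n ≤ k → γ k = γ n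

def IsLamPath (n : ℕ) (γ : ℕ → ℤ × ℤ) : Prop :=
  IsPathFun n γ ∧ (γ 0).1 = 0 ∧ (γ n).2 = 0 ∧ ∀ k, 0 ≤ (γ k).1 ∧ 0 ≤ (γ k).2

def IsPathBtw (n : ℕ) (x y : ℤ × ℤ) (γ : ℕ → ℤ × ℤ) : Prop :=
  IsPathFun n γ ∧ γ 0 = x ∧ γ n = y

def pathArea (n : ℕ) (γ : ℕ → ℤ × ℤ) : ℤ :=
  ∑ k ∈ Finset.range n, if (γ (k + 1)).1 = (γ k).1 + 1 then (γ k).2 else 0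

abbrev DRPath := Σ n : ℕ, {γ : ℕ → ℤ × ℤ // IsLamPath n γ}

noncomputable def pWeight (l : ℝ) (p : DRPath) : ℝ := (1 - 2 * l) * l ^ p.1

def pArea (p : DRPath) : ℤ := pathArea p.1 p.2.1

namespace St6
open Finset

/-! ### counting booleans -/

def cntT (n : ℕ) (η : ℕ → Bool) : ℕ := ∑ k ∈ Finset.range n, if η k then 1 else 0
def cntF (n : ℕ) (η : ℕ → Bool) : ℕ := ∑ k ∈ Finset.range n, if η k then 0 else 1
def cntFfrom (a n : ℕ) (η : ℕ → Bool) : ℕ := ∑ k ∈ Finset.Ico a n, if η k then 0 else 1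
def AA (n : ℕ) (η : ℕ → Bool) : ℕ :=
  ∑ k ∈ Finset.range n, ∑ j ∈ Finset.range k, (if η j then 1 else 0) * (if η k then 0 else 1)
def ext (n : ℕ) (ξ : Fin n → Bool) : ℕ → Bool := fun k => if h : k < n then ξ ⟨k, h⟩ else false
def sgn (n : ℕ) (ξ : Fin n → Bool) : ℤ := ∑ i : Fin n, (if ξ i then (1:ℤ) else -1)

lemma sq_split (g : ℕ → ℕ → ℕ) (n : ℕ) :
    ∑ k ∈ range n, ∑ j ∈ range n, g k j
      = ((∑ k ∈ range n, ∑ j ∈ range k, g k j) + ∑ k ∈ range n, ∑ j ∈ range k, g j k)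
        + ∑ k ∈ range n, g k k := by
  induction n with
  | zero => simp
  | succ n ih =>
    simp only [Finset.sum_range_succ, Finset.sum_add_distrib, ih]
    ring

lemma ico_split (g : ℕ → ℕ → ℕ) (n : ℕ) :
    ∑ k ∈ range n, ∑ j ∈ Finset.Ico k n, g k j
      = (∑ k ∈ range n, ∑ j ∈ range k, g j k) + ∑ k ∈ range n, g k k := by
  induction n with
  | zero => simp
  | succ n ih =>
    rw [Finset.sum_range_succ]
    have h1 : ∀ k ∈ range n, ∑ j ∈ Finset.Ico k (n+1), g k j
        = (∑ j ∈ Finset.Ico k n, g k j) + g k n := by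
      intro k hk
      rw [Finset.sum_Ico_succ_top (le_of_lt (Finset.mem_range.mp hk))]
    rw [Finset.sum_congr rfl h1, Finset.sum_add_distrib, ih]
    simp only [Finset.sum_range_succ]
    have : ∑ j ∈ Finset.Ico n (n+1), g n j = g n n := by simp
    rw [this]
    ring

lemma cntT_add_cntF (n : ℕ) (η : ℕ → Bool) : cntT n η + cntF n η = n := by
  rw [cntT, cntF, ← Finset.sum_add_distrib]
  have : ∀ k ∈ range n, ((if η k then 1 else 0) + if η k then 0 else 1) = 1 := by
    intro k _; cases η k <;> simp
  rw [Finset.sum_congr rfl this]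
  simp

lemma AA_sym (n : ℕ) (η : ℕ → Bool) :
    AA n η + AA n (fun k => !η k) = cntT n η * cntF n η := by
  rw [cntT, cntF, Finset.sum_mul_sum]
  rw [sq_split (fun k j => (if η k then 1 else 0) * (if η j then 0 else 1)) n]
  have hd : ∑ k ∈ range n, (if η k then 1 else 0) * (if η k then 0 else 1) = 0 := by
    apply Finset.sum_eq_zero; intro k _; cases η k <;> simp
  rw [hd, add_zero, AA, AA]
  have h2 : ∀ k ∈ range n, (∑ j ∈ range k, (if η k then 1 else 0) * (if η j then 0 else 1))
      = ∑ j ∈ range k, (if (!η j) then 1 else 0) * (if (!η k) then 0 else 1) := by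
    intro k _
    apply Finset.sum_congr rfl; intro j _
    cases η j <;> cases η k <;> simp
  rw [Finset.sum_congr rfl h2]
  ring

lemma AA_congr {n : ℕ} {η η' : ℕ → Bool} (h : ∀ k < n, η k = η' k) : AA n η = AA n η' := by
  apply Finset.sum_congr rfl; intro k hk
  apply Finset.sum_congr rfl; intro j hj
  rw [h k (Finset.mem_range.mp hk), h j (lt_trans (Finset.mem_range.mp hj) (Finset.mem_range.mp hk))]

lemma cntT_congr {n : ℕ} {η η' : ℕ → Bool} (h : ∀ k < n, η k = η' k) : cntT n η = cntT n η' := by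
  apply Finset.sum_congr rfl; intro k hk; rw [h k (Finset.mem_range.mp hk)]

lemma cntF_congr {n : ℕ} {η η' : ℕ → Bool} (h : ∀ k < n, η k = η' k) : cntF n η = cntF n η' := by
  apply Finset.sum_congr rfl; intro k hk; rw [h k (Finset.mem_range.mp hk)]

lemma cntT_not (n : ℕ) (η : ℕ → Bool) : cntT n (fun k => !η k) = cntF n η := by
  apply Finset.sum_congr rfl; intro k _; cases h : η k <;> simp [h]

lemma cntF_not (n : ℕ) (η : ℕ → Bool) : cntF n (fun k => !η k) = cntT n η := by
  apply Finset.sum_congr rfl; intro k _; cases h : η k <;> simp [h]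

lemma sgn_eq (n : ℕ) (ξ : Fin n → Bool) :
    sgn n ξ = (cntT n (ext n ξ) : ℤ) - (cntF n (ext n ξ) : ℤ) := by
  rw [sgn, cntT, cntF]
  push_cast
  rw [← Finset.sum_sub_distrib]
  rw [← Fin.sum_univ_eq_sum_range
    (fun k => ((if ext n ξ k then (1:ℤ) else 0) - if ext n ξ k then 0 else 1)) n]
  apply Finset.sum_congr rfl
  intro i _
  have : ext n ξ i.1 = ξ i := by simp [ext, i.isLt]
  rw [this]
  cases h : ξ i <;> simp

lemma cheb (n : ℕ) : ∑ ξ : Fin n → Bool, (sgn n ξ)^2 = n * 2^n := by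
  induction n with
  | zero => simp [sgn]
  | succ n ih =>
    have key : ∑ ξ : Fin (n+1) → Bool, (sgn (n+1) ξ)^2
        = ∑ q : Bool × (Fin n → Bool), ((if q.1 then (1:ℤ) else -1) + sgn n q.2)^2 := by
      apply Fintype.sum_equiv (Fin.consEquiv (fun _ : Fin (n+1) => Bool)).symm
      intro ξ
      congr 1
      simp [sgn, Fin.sum_univ_succ, Fin.consEquiv, Fin.tail]
      rfl
    rw [key, Fintype.sum_prod_type, Fintype.sum_bool]
    have comb : (∑ y : Fin n → Bool, (((if (((true:Bool), y) : Bool × (Fin n → Bool)).1 = true then (1:ℤ) else -1) + sgn n (((true:Bool), y) : Bool × (Fin n → Bool)).2) ^ 2)) +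
        ∑ y : Fin n → Bool, (((if (((false:Bool), y) : Bool × (Fin n → Bool)).1 = true then (1:ℤ) else -1) + sgn n (((false:Bool), y) : Bool × (Fin n → Bool)).2) ^ 2)
        = ∑ ξ : Fin n → Bool, (2*(sgn n ξ)^2 + 2) := by
      rw [← Finset.sum_add_distrib]
      apply Finset.sum_congr rfl
      intro ξ _
      show ((1:ℤ) + sgn n ξ)^2 + (-1 + sgn n ξ)^2 = 2*(sgn n ξ)^2 + 2
      ring
    rw [comb, Finset.sum_add_distrib, ← Finset.mul_sum, ih, Finset.sum_const]
    simp only [Finset.card_univ, Fintype.card_fun, Fintype.card_bool, Fintype.card_fin,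
      smul_eq_mul]
    push_cast
    ring

lemma ext_not (n : ℕ) (ξ : Fin n → Bool) :
    ∀ k < n, ext n (fun i => !ξ i) k = !(ext n ξ) k := by
  intro k hk; simp [ext, hk]

lemma half_card {α : Type*} [Fintype α] [DecidableEq α] (P : α → Prop) [DecidablePred P]
    (inv : α → α) (hinv : Function.Injective inv) (hkey : ∀ a, ¬ P a → P (inv a)) :
    Fintype.card α ≤ 2 * (univ.filter P).card := by
  have hmaps : ∀ a ∈ univ.filter (fun a => ¬ P a), inv a ∈ univ.filter P := by
    intro a ha
    simp only [Finset.mem_filter, Finset.mem_univ, true_and] at ha ⊢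
    exact hkey a ha
  have hcard := Finset.card_le_card_of_injOn inv hmaps hinv.injOn
  have htot := Finset.card_filter_add_card_filter_not (s := univ) P
  rw [← Finset.card_univ]
  omega

lemma inter_card {α : Type*} [Fintype α] (P Q : α → Prop) [DecidablePred P] [DecidablePred Q]
    (hP : Fintype.card α ≤ 2 * (univ.filter P).card)
    (hQ : 4 * (univ.filter (fun a => ¬ Q a)).card ≤ Fintype.card α) :
    Fintype.card α ≤ 4 * (univ.filter (fun a => P a ∧ Q a)).card := by
  classical
  have hunion : univ.filter (fun a => ¬ (P a ∧ Q a))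
      ⊆ univ.filter (fun a => ¬ P a) ∪ univ.filter (fun a => ¬ Q a) := by
    intro a ha
    simp only [Finset.mem_filter, Finset.mem_univ, true_and, Finset.mem_union] at ha ⊢
    tauto
  have hcard1 := Finset.card_le_card hunion
  have hcard2 := Finset.card_union_le (univ.filter (fun a : α => ¬ P a))
    (univ.filter (fun a : α => ¬ Q a))
  have htot1 := Finset.card_filter_add_card_filter_not (s := univ) P
  have htot3 := Finset.card_filter_add_card_filter_not (s := univ) (fun a => P a ∧ Q a)
  rw [← Finset.card_univ] at hP hQ ⊢
  omega

lemma G_key (n : ℕ) (ξ : Fin n → Bool)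
    (hξ : ¬ (cntT n (ext n ξ) * cntF n (ext n ξ) ≤ 2 * AA n (ext n ξ))) :
    cntT n (ext n (fun i => !ξ i)) * cntF n (ext n (fun i => !ξ i))
      ≤ 2 * AA n (ext n (fun i => !ξ i)) := by
  have e1 : cntT n (ext n (fun i => !ξ i)) = cntF n (ext n ξ) := by
    rw [cntT_congr (ext_not n ξ), cntT_not]
  have e2 : cntF n (ext n (fun i => !ξ i)) = cntT n (ext n ξ) := by
    rw [cntF_congr (ext_not n ξ), cntF_not]
  have e3 : AA n (ext n (fun i => !ξ i)) = AA n (fun k => !(ext n ξ) k) :=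
    AA_congr (ext_not n ξ)
  have hsym := AA_sym n (ext n ξ)
  rw [e1, e2, e3]
  have hc : cntF n (ext n ξ) * cntT n (ext n ξ) = cntT n (ext n ξ) * cntF n (ext n ξ) :=
    Nat.mul_comm _ _
  omega

lemma B_card (n : ℕ) :
    4 * (univ.filter (fun ξ : Fin n → Bool => ¬ ((sgn n ξ)^2 ≤ 4 * (n:ℤ)))).card ≤ 2^n := by
  set Bc := univ.filter (fun ξ : Fin n → Bool => ¬ ((sgn n ξ)^2 ≤ 4 * (n:ℤ))) with hBc
  have h1 : Bc.card • ((4*(n:ℤ)+1)) ≤ ∑ ξ ∈ Bc, (sgn n ξ)^2 := by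
    apply Finset.card_nsmul_le_sum
    intro x hx
    rw [hBc, Finset.mem_filter] at hx
    omega
  have h2 : ∑ ξ ∈ Bc, (sgn n ξ)^2 ≤ ∑ ξ : Fin n → Bool, (sgn n ξ)^2 := by
    apply Finset.sum_le_sum_of_subset_of_nonneg (Finset.subset_univ _)
    intro i _ _; positivity
  rw [cheb n] at h2
  rw [nsmul_eq_mul] at h1
  have h3 : (Bc.card : ℤ) * (4*n+1) ≤ n * 2^n := le_trans h1 h2
  have h4 : (4 * Bc.card : ℤ) ≤ 2^n := by
    by_contra hcon
    push_neg at hcon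
    have h5 : (4*(n:ℤ))*2^n ≤ 4*n*(4*Bc.card) :=
      mul_le_mul_of_nonneg_left (le_of_lt hcon) (by positivity)
    have h6 : (0:ℤ) ≤ 2^n := by positivity
    linarith
  exact_mod_cast h4

lemma area_lb {n N : ℕ} (hn : 8 * N^2 + 4*n ≤ n^2) (ξ : Fin n → Bool)
    (hp : cntT n (ext n ξ) * cntF n (ext n ξ) ≤ 2 * AA n (ext n ξ))
    (hq : (sgn n ξ)^2 ≤ 4*(n:ℤ)) : N^2 ≤ AA n (ext n ξ) := by
  have hrd := cntT_add_cntF n (ext n ξ)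
  have hq' : ((cntT n (ext n ξ):ℤ) - cntF n (ext n ξ))^2 ≤ 4*n := by
    rw [sgn_eq] at hq; exact hq
  have hrdn : (cntT n (ext n ξ):ℤ) + cntF n (ext n ξ) = n := by exact_mod_cast hrd
  have hn' : 8*(N:ℤ)^2 + 4*n ≤ (n:ℤ)^2 := by exact_mod_cast hn
  have key : 4*((cntT n (ext n ξ):ℤ) * cntF n (ext n ξ))
      = ((cntT n (ext n ξ):ℤ) + cntF n (ext n ξ))^2
        - ((cntT n (ext n ξ):ℤ) - cntF n (ext n ξ))^2 := by ring
  rw [hrdn] at key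
  have h1 : 2*(N:ℤ)^2 ≤ (cntT n (ext n ξ):ℤ) * cntF n (ext n ξ) := by nlinarith
  have h2 : 2*N^2 ≤ cntT n (ext n ξ) * cntF n (ext n ξ) := by exact_mod_cast h1
  omega

lemma count_main (n N : ℕ) (hn : 8 * N^2 + 4*n ≤ n^2) :
    2^n ≤ 4 * (univ.filter (fun ξ : Fin n → Bool => N^2 ≤ AA n (ext n ξ))).card := by
  classical
  have hG : Fintype.card (Fin n → Bool) ≤ 2 * (univ.filter (fun ξ : Fin n → Bool =>
      cntT n (ext n ξ) * cntF n (ext n ξ) ≤ 2 * AA n (ext n ξ))).card := by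
    apply half_card _ (fun ξ i => !ξ i)
    · intro a b hab
      funext i
      have := congrFun hab i
      simpa using this
    · exact G_key n
  have hB : 4 * (univ.filter (fun ξ : Fin n → Bool => ¬ ((sgn n ξ)^2 ≤ 4 * (n:ℤ)))).card
      ≤ Fintype.card (Fin n → Bool) := by
    rw [Fintype.card_fun, Fintype.card_bool, Fintype.card_fin]
    exact B_card n
  have hGB := inter_card _ _ hG hB
  have hsub : univ.filter (fun ξ : Fin n → Bool =>
        (cntT n (ext n ξ) * cntF n (ext n ξ) ≤ 2 * AA n (ext n ξ)) ∧ (sgn n ξ)^2 ≤ 4 * (n:ℤ))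
      ⊆ univ.filter (fun ξ : Fin n → Bool => N^2 ≤ AA n (ext n ξ)) := by
    intro ξ hξ
    simp only [Finset.mem_filter, Finset.mem_univ, true_and] at hξ ⊢
    exact area_lb hn ξ hξ.1 hξ.2
  have hmono := Finset.card_le_card hsub
  rw [Fintype.card_fun, Fintype.card_bool, Fintype.card_fin] at hGB
  omega

/-! ### the path attached to a boolean word -/

def toPath (n : ℕ) (η : ℕ → Bool) : ℕ → ℤ × ℤ :=
  fun k => ((cntT (min k n) η : ℤ), (cntFfrom (min k n) n η : ℤ))

lemma toPath_fst {n : ℕ} (η : ℕ → Bool) {k : ℕ} (hk : k ≤ n) :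
    (toPath n η k).1 = (cntT k η : ℤ) := by
  simp [toPath, min_eq_left hk]

lemma toPath_snd {n : ℕ} (η : ℕ → Bool) {k : ℕ} (hk : k ≤ n) :
    (toPath n η k).2 = (cntFfrom k n η : ℤ) := by
  simp [toPath, min_eq_left hk]

lemma cntT_succ (k : ℕ) (η : ℕ → Bool) :
    cntT (k+1) η = cntT k η + if η k then 1 else 0 := Finset.sum_range_succ _ _

lemma cntFfrom_bot {k n : ℕ} (hk : k < n) (η : ℕ → Bool) :
    cntFfrom k n η = (if η k then 0 else 1) + cntFfrom (k+1) n η :=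
  Finset.sum_eq_sum_Ico_succ_bot hk _

lemma toPath_step {n : ℕ} (η : ℕ → Bool) {k : ℕ} (hk : k < n) :
    toPath n η (k+1) = if η k then ((toPath n η k).1 + 1, (toPath n η k).2)
      else ((toPath n η k).1, (toPath n η k).2 - 1) := by
  have h1 : (toPath n η (k+1)).1 = (cntT (k+1) η : ℤ) := toPath_fst η hk
  have h2 : (toPath n η (k+1)).2 = (cntFfrom (k+1) n η : ℤ) := toPath_snd η hk
  have h3 : (toPath n η k).1 = (cntT k η : ℤ) := toPath_fst η (le_of_lt hk)
  have h4 : (toPath n η k).2 = (cntFfrom k n η : ℤ) := toPath_snd η (le_of_lt hk)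
  have h5 := cntT_succ k η
  have h6 := cntFfrom_bot hk η
  cases h : η k with
  | true =>
    simp only [h, if_true] at h5 h6 ⊢
    apply Prod.ext
    · rw [h1, h3, h5]; push_cast; ring
    · rw [h2, h4, h6]; push_cast; ring
  | false =>
    simp only [h, Bool.false_eq_true, if_false] at h5 h6 ⊢
    apply Prod.ext
    · rw [h1, h3, h5]; push_cast; ring
    · rw [h2, h4, h6]; push_cast; ring

lemma toPath_isLam (n : ℕ) (η : ℕ → Bool) : IsLamPath n (toPath n η) := by
  refine ⟨⟨?_, ?_⟩, ?_, ?_, ?_⟩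
  · intro k hk
    rw [toPath_step η hk]
    cases h : η k with
    | true => left; simp
    | false => right; simp
  · intro k hk
    simp [toPath, min_eq_right hk, min_self]
  · simp [toPath, cntT]
  · rw [toPath_snd η le_rfl]
    simp [cntFfrom]
  · intro k
    constructor <;> simp [toPath]

lemma toPath_area (n : ℕ) (η : ℕ → Bool) : pathArea n (toPath n η) = (AA n η : ℤ) := by
  have h1 : pathArea n (toPath n η)
      = ∑ k ∈ range n, if η k then (cntFfrom k n η : ℤ) else 0 := by
    apply Finset.sum_congr rfl
    intro k hk
    have hk' := Finset.mem_range.mp hk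
    rw [toPath_step η hk', toPath_snd η (le_of_lt hk')]
    cases h : η k with
    | true => simp [h]
    | false =>
      simp only [h, Bool.false_eq_true, if_false]
      have : ¬ ((toPath n η k).1 = (toPath n η k).1 + 1) := by omega
      simp [this]
  rw [h1]
  have h2 : ∑ k ∈ range n, (if η k then (cntFfrom k n η : ℤ) else 0)
      = ((∑ k ∈ range n, if η k then cntFfrom k n η else 0 : ℕ) : ℤ) := by
    push_cast
    apply Finset.sum_congr rfl
    intro k _; cases h : η k <;> simp [h]
  rw [h2]
  congr 1
  have h3 : ∀ k ∈ range n, (if η k then cntFfrom k n η else 0)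
      = ∑ j ∈ Finset.Ico k n, (if η k then 1 else 0) * (if η j then 0 else 1) := by
    intro k _
    cases h : η k with
    | true => simp [h, cntFfrom]
    | false => simp [h]
  rw [Finset.sum_congr rfl h3, ico_split]
  have h4 : ∑ k ∈ range n, (if η k then 1 else 0) * (if η k then 0 else 1) = 0 := by
    apply Finset.sum_eq_zero; intro k _; cases h : η k <;> simp [h]
  rw [h4, add_zero, AA]

lemma toPath_ext_inj {n : ℕ} {ξ ξ' : Fin n → Bool}
    (h : toPath n (ext n ξ) = toPath n (ext n ξ')) : ξ = ξ' := by
  have hc : ∀ k, k ≤ n → cntT k (ext n ξ) = cntT k (ext n ξ') := by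
    intro k hk
    have := congrFun h k
    have e1 := toPath_fst (n := n) (ext n ξ) hk
    have e2 := toPath_fst (n := n) (ext n ξ') hk
    rw [this] at e1
    rw [e2] at e1
    exact_mod_cast e1.symm
  funext i
  have h1 := hc i.1 (le_of_lt i.isLt)
  have h2 := hc (i.1+1) i.isLt
  rw [cntT_succ, cntT_succ, h1] at h2
  have e1 : ext n ξ i.1 = ξ i := by simp [ext, i.isLt]
  have e2 : ext n ξ' i.1 = ξ' i := by simp [ext, i.isLt]
  rw [e1, e2] at h2
  cases hx : ξ i <;> cases hy : ξ' i <;> rw [hx, hy] at h2 <;> simp_all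

/-! ### every lam path is determined by its steps -/

lemma step_cases {n : ℕ} {γ : ℕ → ℤ × ℤ} (h : IsLamPath n γ) {k : ℕ} (hk : k < n) :
    (((γ (k+1)).1 = (γ k).1 + 1) ∧ γ (k+1) = ((γ k).1 + 1, (γ k).2))
    ∨ ((¬ ((γ (k+1)).1 = (γ k).1 + 1)) ∧ γ (k+1) = ((γ k).1, (γ k).2 - 1)) := by
  rcases h.1.1 k hk with hs | hs
  · left; exact ⟨by rw [hs], hs⟩
  · right
    refine ⟨?_, hs⟩
    rw [hs]; simp only []; omega

lemma height_eq {n : ℕ} {γ : ℕ → ℤ × ℤ} (h : IsLamPath n γ) :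
    ∀ m, m ≤ n → (γ m).2 = (γ 0).2
      - ∑ k ∈ range m, (if (γ (k+1)).1 = (γ k).1 + 1 then 0 else 1) := by
  intro m
  induction m with
  | zero => simp
  | succ m ih =>
    intro hm
    have hm' : m < n := hm
    rcases step_cases h hm' with ⟨hc, he⟩ | ⟨hc, he⟩
    · rw [Finset.sum_range_succ, if_pos hc, he]
      simpa using ih (le_of_lt hm')
    · rw [Finset.sum_range_succ, if_neg hc, he]
      have := ih (le_of_lt hm')
      simp only []
      omega

lemma start_height {n : ℕ} {γ : ℕ → ℤ × ℤ} (h : IsLamPath n γ) :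
    (γ 0).2 = ∑ k ∈ range n, (if (γ (k+1)).1 = (γ k).1 + 1 then 0 else 1) := by
  have := height_eq h n le_rfl
  rw [h.2.2.1] at this
  omega

lemma path_eq_of_steps {n : ℕ} {γ γ' : ℕ → ℤ × ℤ} (h : IsLamPath n γ) (h' : IsLamPath n γ')
    (hs : ∀ k, k < n → (((γ (k+1)).1 = (γ k).1 + 1) ↔ ((γ' (k+1)).1 = (γ' k).1 + 1))) :
    γ = γ' := by
  have h0 : γ 0 = γ' 0 := by
    have e1 : (γ 0).1 = (γ' 0).1 := by rw [h.2.1, h'.2.1]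
    have e2 : (γ 0).2 = (γ' 0).2 := by
      rw [start_height h, start_height h']
      apply Finset.sum_congr rfl
      intro k hk
      have := hs k (Finset.mem_range.mp hk)
      by_cases hc : (γ (k+1)).1 = (γ k).1 + 1
      · rw [if_pos hc, if_pos (this.mp hc)]
      · rw [if_neg hc, if_neg (fun hc' => hc (this.mpr hc'))]
    exact Prod.ext e1 e2
  have hle : ∀ k, k ≤ n → γ k = γ' k := by
    intro k
    induction k with
    | zero => intro _; exact h0
    | succ k ih =>
      intro hk
      have hk' : k < n := hk
      have hkk := ih (le_of_lt hk')
      rcases step_cases h hk' with ⟨hc, he⟩ | ⟨hc, he⟩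
      · rcases step_cases h' hk' with ⟨hc', he'⟩ | ⟨hc', he'⟩
        · rw [he, he', hkk]
        · exact absurd ((hs k hk').mp hc) hc'
      · rcases step_cases h' hk' with ⟨hc', he'⟩ | ⟨hc', he'⟩
        · exact absurd ((hs k hk').mpr hc') hc
        · rw [he, he', hkk]
  funext k
  rcases le_or_gt k n with hk | hk
  · exact hle k hk
  · rw [h.1.2 k (le_of_lt hk), h'.1.2 k (le_of_lt hk), hle n le_rfl]

def stepsOf (n : ℕ) (γ : ℕ → ℤ × ℤ) : Fin n → Bool :=
  fun i => decide ((γ (i.1+1)).1 = (γ i.1).1 + 1)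

lemma stepsOf_inj {n : ℕ} {γ γ' : ℕ → ℤ × ℤ} (h : IsLamPath n γ) (h' : IsLamPath n γ')
    (he : stepsOf n γ = stepsOf n γ') : γ = γ' := by
  apply path_eq_of_steps h h'
  intro k hk
  have := congrFun he ⟨k, hk⟩
  simpa [stepsOf, decide_eq_decide] using this

/-! ### finiteness and summability -/

noncomputable instance pathFintype (n : ℕ) : Fintype {γ : ℕ → ℤ × ℤ // IsLamPath n γ} :=
  Fintype.ofInjective (fun γ => stepsOf n γ.1)
    (fun a b hab => Subtype.ext (stepsOf_inj a.2 b.2 hab))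

lemma card_paths_le (n : ℕ) : Fintype.card {γ : ℕ → ℤ × ℤ // IsLamPath n γ} ≤ 2^n := by
  have := Fintype.card_le_of_injective (fun γ : {γ : ℕ → ℤ × ℤ // IsLamPath n γ} => stepsOf n γ.1)
    (fun a b hab => Subtype.ext (stepsOf_inj a.2 b.2 hab))
  simpa [Fintype.card_fun] using this

variable {l : ℝ}

lemma pWeight_nonneg (h1 : 0 < l) (h2 : l < 1/2) (p : DRPath) : 0 ≤ pWeight l p := by
  have : 0 ≤ 1 - 2*l := by linarith
  exact mul_nonneg this (pow_nonneg h1.le _)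

lemma summable_pWeight (h1 : 0 < l) (h2 : l < 1/2) : Summable (pWeight l) := by
  have h2l0 : (0:ℝ) ≤ 2*l := by linarith
  have h2l1 : 2*l < 1 := by linarith
  have hgeo : Summable (fun n : ℕ => (1-2*l) * (2*l)^n) :=
    (summable_geometric_of_lt_one h2l0 h2l1).mul_left _
  apply (summable_sigma_of_nonneg (pWeight_nonneg h1 h2)).mpr
  constructor
  · intro n
    exact (hasSum_fintype _).summable
  · apply Summable.of_nonneg_of_le _ _ hgeo
    · intro n
      rw [tsum_fintype]
      apply Finset.sum_nonneg
      intro γ _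
      exact pWeight_nonneg h1 h2 _
    · intro n
      rw [tsum_fintype]
      have : ∀ γ ∈ (univ : Finset {γ : ℕ → ℤ × ℤ // IsLamPath n γ}),
          pWeight l ⟨n, γ⟩ = (1-2*l) * l^n := fun _ _ => rfl
      rw [Finset.sum_congr rfl this, Finset.sum_const, Finset.card_univ, nsmul_eq_mul]
      have hcard : (Fintype.card {γ : ℕ → ℤ × ℤ // IsLamPath n γ} : ℝ) ≤ 2^n := by
        exact_mod_cast card_paths_le n
      have hw : (0:ℝ) ≤ (1-2*l) * l^n := by
        apply mul_nonneg (by linarith) (pow_nonneg h1.le _)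
      calc (Fintype.card {γ : ℕ → ℤ × ℤ // IsLamPath n γ} : ℝ) * ((1-2*l) * l^n)
          ≤ 2^n * ((1-2*l) * l^n) := by
            exact mul_le_mul_of_nonneg_right hcard hw
      _ = (1-2*l) * (2*l)^n := by rw [mul_pow]; ring

lemma num_le (h1 : 0 < l) (h2 : l < 1/2) (m : ℕ) (P : DRPath → Prop)
    (hP : ∀ p, P p → m ≤ p.1) :
    ∑' p : {p : DRPath // P p}, pWeight l p.1 ≤ (2*l)^m := by
  have h2l0 : (0:ℝ) ≤ 2*l := by linarith
  have h2l1 : 2*l < 1 := by linarith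
  classical
  set f : DRPath → ℝ := fun p => if m ≤ p.1 then pWeight l p else 0 with hf
  have hf_nonneg : ∀ p, 0 ≤ f p := by
    intro p
    by_cases h : m ≤ p.1 <;> simp [hf, h, pWeight_nonneg h1 h2 p]
  have hf_le : ∀ p, f p ≤ pWeight l p := by
    intro p
    by_cases h : m ≤ p.1 <;> simp [hf, h, pWeight_nonneg h1 h2 p]
  have hf_sum : Summable f :=
    Summable.of_nonneg_of_le hf_nonneg hf_le (summable_pWeight h1 h2)
  have step1 : ∑' p : {p : DRPath // P p}, pWeight l p.1 ≤ ∑' p : DRPath, f p := by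
    apply Summable.tsum_le_tsum_of_inj (fun p : {p : DRPath // P p} => p.1) Subtype.val_injective
    · intro c _
      exact hf_nonneg c
    · intro b
      have hb : m ≤ (b.1).1 := hP b.1 b.2
      simp [hf, hb]
    · exact (summable_pWeight h1 h2).subtype _
    · exact hf_sum
  have step2 : ∑' p : DRPath, f p = ∑' n : ℕ, ∑' γ : {γ : ℕ → ℤ × ℤ // IsLamPath n γ}, f ⟨n, γ⟩ :=
    Summable.tsum_sigma hf_sum
  set g : ℕ → ℝ := fun n => if m ≤ n then (1-2*l) * (2*l)^n else 0 with hg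
  have hg_nonneg : ∀ n, 0 ≤ g n := by
    intro n
    by_cases h : m ≤ n
    · simp only [hg, if_pos h]
      apply mul_nonneg (by linarith) (pow_nonneg h2l0 _)
    · simp [hg, h]
  have hg_sum : Summable g := by
    apply Summable.of_nonneg_of_le hg_nonneg _
      ((summable_geometric_of_lt_one h2l0 h2l1).mul_left (1-2*l))
    intro n
    by_cases h : m ≤ n
    · simp [hg, h]
    · simp only [hg, if_neg h]
      apply mul_nonneg (by linarith) (pow_nonneg h2l0 _)
  have hfib : ∀ n : ℕ, ∑' γ : {γ : ℕ → ℤ × ℤ // IsLamPath n γ}, f ⟨n, γ⟩ ≤ g n := by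
    intro n
    rw [tsum_fintype]
    have heval : ∀ γ ∈ (univ : Finset {γ : ℕ → ℤ × ℤ // IsLamPath n γ}),
        f ⟨n, γ⟩ = if m ≤ n then (1-2*l) * l^n else 0 := fun _ _ => rfl
    rw [Finset.sum_congr rfl heval, Finset.sum_const, Finset.card_univ, nsmul_eq_mul]
    by_cases hm : m ≤ n
    · rw [if_pos hm, hg]
      simp only [if_pos hm]
      have hcard : (Fintype.card {γ : ℕ → ℤ × ℤ // IsLamPath n γ} : ℝ) ≤ 2^n := by
        exact_mod_cast card_paths_le n
      have hw : (0:ℝ) ≤ (1-2*l) * l^n :=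
        mul_nonneg (by linarith) (pow_nonneg h1.le _)
      calc (Fintype.card {γ : ℕ → ℤ × ℤ // IsLamPath n γ} : ℝ) * ((1-2*l) * l^n)
          ≤ 2^n * ((1-2*l) * l^n) := mul_le_mul_of_nonneg_right hcard hw
      _ = (1-2*l) * (2*l)^n := by rw [mul_pow]; ring
    · rw [if_neg hm, hg]
      simp [hm]
  have hsum_fib : Summable (fun n : ℕ => ∑' γ : {γ : ℕ → ℤ × ℤ // IsLamPath n γ}, f ⟨n, γ⟩) :=
    ((summable_sigma_of_nonneg hf_nonneg).mp hf_sum).2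
  have step3 : ∑' n : ℕ, ∑' γ : {γ : ℕ → ℤ × ℤ // IsLamPath n γ}, f ⟨n, γ⟩ ≤ ∑' n, g n :=
    Summable.tsum_le_tsum hfib hsum_fib hg_sum
  have step4 : ∑' n, g n = (2*l)^m := by
    have hshift := Summable.sum_add_tsum_nat_add (f := g) m hg_sum
    have hz : ∑ i ∈ range m, g i = 0 := by
      apply Finset.sum_eq_zero
      intro i hi
      rw [hg]
      simp [Nat.not_le.mpr (Finset.mem_range.mp hi)]
    have hrest : ∑' i : ℕ, g (i + m) = (2*l)^m := by
      have : ∀ i : ℕ, g (i + m) = ((1-2*l) * (2*l)^m) * (2*l)^i := by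
        intro i
        rw [hg]
        simp only [if_pos (Nat.le_add_left m i)]
        rw [pow_add]
        ring
      rw [tsum_congr this, tsum_mul_left, tsum_geometric_of_lt_one h2l0 h2l1]
      have hne : (1 - 2*l) ≠ 0 := by linarith
      field_simp
    rw [← hshift, hz, hrest, zero_add]
  calc ∑' p : {p : DRPath // P p}, pWeight l p.1 ≤ ∑' p : DRPath, f p := step1
  _ = _ := step2
  _ ≤ ∑' n, g n := step3
  _ = (2*l)^m := step4

lemma denom_ge (h1 : 0 < l) (h2 : l < 1/2) (n N : ℕ) (hn : 8 * N^2 + 4*n ≤ n^2) :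
    ((1-2*l)/4) * (2*l)^n ≤ ∑' p : {p : DRPath // (N:ℤ)^2 ≤ pArea p}, pWeight l p.1 := by
  classical
  set F := univ.filter (fun ξ : Fin n → Bool => N^2 ≤ AA n (ext n ξ)) with hF
  have hcnt := count_main n N hn
  rw [← hF] at hcnt
  have harea : ∀ ξ : Fin n → Bool, ξ ∈ F →
      (N:ℤ)^2 ≤ pArea ⟨n, ⟨toPath n (ext n ξ), toPath_isLam n _⟩⟩ := by
    intro ξ hξ
    rw [hF, Finset.mem_filter] at hξ
    have he : pArea ⟨n, ⟨toPath n (ext n ξ), toPath_isLam n _⟩⟩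
        = (AA n (ext n ξ) : ℤ) := toPath_area n _
    rw [he]
    exact_mod_cast hξ.2
  set emb : {ξ : Fin n → Bool // ξ ∈ F} → {p : DRPath // (N:ℤ)^2 ≤ pArea p} :=
    fun x => ⟨⟨n, ⟨toPath n (ext n x.1), toPath_isLam n _⟩⟩, harea x.1 x.2⟩ with hemb
  have hinj : Function.Injective emb := by
    intro a b hab
    apply Subtype.ext
    have h1' : (⟨n, ⟨toPath n (ext n a.1), toPath_isLam n _⟩⟩ : DRPath)
        = ⟨n, ⟨toPath n (ext n b.1), toPath_isLam n _⟩⟩ := congrArg Subtype.val hab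
    have h2' : toPath n (ext n a.1) = toPath n (ext n b.1) := by
      have hh := (Sigma.mk.inj_iff.mp h1').2
      exact congrArg Subtype.val (eq_of_heq hh)
    exact toPath_ext_inj h2'
  have hsum := Summable.sum_le_tsum (f := fun p : {p : DRPath // (N:ℤ)^2 ≤ pArea p} => pWeight l p.1)
    (F.attach.map ⟨emb, hinj⟩)
    (fun p _ => pWeight_nonneg h1 h2 p.1) ((summable_pWeight h1 h2).subtype _)
  have heval : ∑ p ∈ F.attach.map ⟨emb, hinj⟩, pWeight l p.1
      = (F.card : ℝ) * ((1-2*l) * l^n) := by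
    rw [Finset.sum_map]
    have : ∀ x ∈ F.attach, pWeight l ((⟨emb, hinj⟩ : _ ↪ _) x).1 = (1-2*l) * l^n :=
      fun _ _ => rfl
    rw [Finset.sum_congr rfl this, Finset.sum_const, Finset.card_attach, nsmul_eq_mul]
  have hcard : ((2:ℝ)^n) / 4 ≤ (F.card : ℝ) := by
    have : ((2:ℝ))^n ≤ 4 * F.card := by exact_mod_cast hcnt
    linarith
  have hw : (0:ℝ) ≤ (1-2*l) * l^n := mul_nonneg (by linarith) (pow_nonneg h1.le _)
  calc ((1-2*l)/4) * (2*l)^n = ((2:ℝ)^n/4) * ((1-2*l) * l^n) := by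
        rw [mul_pow]; ring
  _ ≤ (F.card : ℝ) * ((1-2*l) * l^n) := mul_le_mul_of_nonneg_right hcard hw
  _ = ∑ p ∈ F.attach.map ⟨emb, hinj⟩, pWeight l p.1 := heval.symm
  _ ≤ _ := hsum

end St6

/-- Exponential tail for the length of the area-conditioned walk: there are `c, C > 0`
such that for every `N ≥ 1` and `t ≥ 0`,
`P_λ^{N²}[|Γ| ≥ tN] ≤ C exp(−cN(t − 2√2))`. -/
theorem stmt6 (l : ℝ) (h1 : 0 < l) (h2 : l < 1 / 2) :
    ∃ c C : ℝ, 0 < c ∧ 0 < C ∧ ∀ N : ℕ, 1 ≤ N → ∀ t : ℝ, 0 ≤ t →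
      (∑' p : {p : DRPath // (N : ℤ) ^ 2 ≤ pArea p ∧ t * (N : ℝ) ≤ (p.1 : ℝ)},
          pWeight l p.1) /
        (∑' p : {p : DRPath // (N : ℤ) ^ 2 ≤ pArea p}, pWeight l p.1)
      ≤ C * Real.exp (-c * (N : ℝ) * (t - 2 * Real.sqrt 2)) := by
  classical
  have h2l0 : (0:ℝ) < 2*l := by linarith
  have h2l1 : 2*l < 1 := by linarith
  have h12l : (0:ℝ) < 1 - 2*l := by linarith
  set L := Real.log (2*l) with hL
  have hlog : L < 0 := Real.log_neg h2l0 h2l1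
  refine ⟨-L, 4 / ((1-2*l) * (2*l)^11), by linarith, ?_, ?_⟩
  · apply div_pos (by norm_num) (mul_pos h12l (pow_pos h2l0 _))
  intro N hN t ht
  set n := ⌈2*Real.sqrt 2*(N:ℝ)⌉₊ + 10 with hn
  set m := ⌈t*(N:ℝ)⌉₊ with hm
  have hs2 : (1:ℝ) ≤ Real.sqrt 2 := by
    rw [show (1:ℝ) = Real.sqrt 1 from (Real.sqrt_one).symm]
    exact Real.sqrt_le_sqrt (by norm_num)
  have hNr : (1:ℝ) ≤ (N:ℝ) := by exact_mod_cast hN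
  have hceil_lb : 2*Real.sqrt 2*(N:ℝ) ≤ (⌈2*Real.sqrt 2*(N:ℝ)⌉₊:ℝ) := Nat.le_ceil _
  have hceil_ub : (⌈2*Real.sqrt 2*(N:ℝ)⌉₊:ℝ) < 2*Real.sqrt 2*(N:ℝ) + 1 :=
    Nat.ceil_lt_add_one (by positivity)
  have hn_lb : 2*Real.sqrt 2*(N:ℝ) + 10 ≤ (n:ℝ) := by
    rw [hn]; push_cast; linarith
  have hn_ub : (n:ℝ) ≤ 2*Real.sqrt 2*(N:ℝ) + 11 := by
    rw [hn]; push_cast; linarith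
  have hsq2 : (Real.sqrt 2)^2 = 2 := Real.sq_sqrt (by norm_num)
  have hss : (2*Real.sqrt 2*(N:ℝ))^2 = 8*(N:ℝ)^2 := by
    rw [mul_pow, mul_pow, hsq2]; ring
  have hs0 : (0:ℝ) ≤ 2*Real.sqrt 2*(N:ℝ) := by positivity
  have h8 : 8 * (N:ℝ)^2 + 4*(n:ℝ) ≤ (n:ℝ)^2 := by
    have hkey : (2*Real.sqrt 2*(N:ℝ) + 10)^2 ≤ (n:ℝ)^2 := by
      apply pow_le_pow_left₀ (by positivity) hn_lb
    have hexp : (2*Real.sqrt 2*(N:ℝ)+10)^2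
        = (2*Real.sqrt 2*(N:ℝ))^2 + 20*(2*Real.sqrt 2*(N:ℝ)) + 100 := by ring
    linarith
  have h8' : 8 * N^2 + 4*n ≤ n^2 := by exact_mod_cast h8
  have hden := St6.denom_ge h1 h2 n N h8'
  have hnum := St6.num_le h1 h2 m
    (fun p : DRPath => (N : ℤ) ^ 2 ≤ pArea p ∧ t * (N : ℝ) ≤ (p.1 : ℝ))
    (fun p hp => Nat.ceil_le.mpr hp.2)
  have hD0 : (0:ℝ) < ((1-2*l)/4) * (2*l)^n := by
    apply mul_pos (by linarith) (pow_pos h2l0 _)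
  have step1 : (∑' p : {p : DRPath // (N : ℤ) ^ 2 ≤ pArea p ∧ t * (N : ℝ) ≤ (p.1 : ℝ)},
          pWeight l p.1) /
        (∑' p : {p : DRPath // (N : ℤ) ^ 2 ≤ pArea p}, pWeight l p.1)
      ≤ (2*l)^m / (((1-2*l)/4) * (2*l)^n) :=
    div_le_div₀ (pow_nonneg h2l0.le m) hnum hD0 hden
  -- translate powers to exponentials
  have hpow : ∀ k : ℕ, ((2*l):ℝ)^k = Real.exp (L * k) := by
    intro k
    rw [← Real.rpow_natCast (2*l) k, Real.rpow_def_of_pos h2l0]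
  have e1 : ((2*l):ℝ)^m ≤ Real.exp (L * (t*(N:ℝ))) := by
    rw [hpow m]
    apply Real.exp_le_exp.mpr
    apply mul_le_mul_of_nonpos_left (Nat.le_ceil _) hlog.le
  have e2 : Real.exp (L * (2*Real.sqrt 2*(N:ℝ) + 11)) ≤ ((2*l):ℝ)^n := by
    rw [hpow n]
    apply Real.exp_le_exp.mpr
    apply mul_le_mul_of_nonpos_left hn_ub hlog.le
  have hE0 : (0:ℝ) < ((1-2*l)/4) * Real.exp (L * (2*Real.sqrt 2*(N:ℝ) + 11)) := by
    apply mul_pos (by linarith) (Real.exp_pos _)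
  have step2 : (2*l)^m / (((1-2*l)/4) * (2*l)^n)
      ≤ Real.exp (L * (t*(N:ℝ))) / (((1-2*l)/4) * Real.exp (L * (2*Real.sqrt 2*(N:ℝ) + 11))) := by
    apply div_le_div₀ (Real.exp_pos _).le e1 hE0
    apply mul_le_mul_of_nonneg_left e2 (by linarith)
  have hfinal : Real.exp (L * (t*(N:ℝ))) / (((1-2*l)/4) * Real.exp (L * (2*Real.sqrt 2*(N:ℝ) + 11)))
      = 4 / ((1-2*l) * (2*l)^11) * Real.exp (-(-L) * (N:ℝ) * (t - 2 * Real.sqrt 2)) := by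
    have hexpL : Real.exp L = 2*l := Real.exp_log h2l0
    have h11 : Real.exp (L*(2*Real.sqrt 2*(N:ℝ) + 11))
        = Real.exp (L*(2*Real.sqrt 2*(N:ℝ))) * (2*l)^(11:ℕ) := by
      rw [← hexpL, ← Real.exp_nat_mul, ← Real.exp_add]
      congr 1
      push_cast
      ring
    have htN : Real.exp (L*(t*(N:ℝ)))
        = Real.exp (-(-L) * (N:ℝ) * (t - 2 * Real.sqrt 2)) * Real.exp (L*(2*Real.sqrt 2*(N:ℝ))) := by
      rw [← Real.exp_add]
      congr 1
      ring
    rw [h11, htN]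
    have hne1 : Real.exp (L*(2*Real.sqrt 2*(N:ℝ))) ≠ 0 := (Real.exp_pos _).ne'
    have hne2 : (1-2*l) ≠ 0 := by linarith
    have hne3 : ((2*l):ℝ)^(11:ℕ) ≠ 0 := pow_ne_zero _ (by linarith)
    field_simp
  calc (∑' p : {p : DRPath // (N : ℤ) ^ 2 ≤ pArea p ∧ t * (N : ℝ) ≤ (p.1 : ℝ)},
          pWeight l p.1) /
        (∑' p : {p : DRPath // (N : ℤ) ^ 2 ≤ pArea p}, pWeight l p.1)
      ≤ (2*l)^m / (((1-2*l)/4) * (2*l)^n) := step1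
  _ ≤ Real.exp (L * (t*(N:ℝ))) / (((1-2*l)/4) * Real.exp (L * (2*Real.sqrt 2*(N:ℝ) + 11))) := step2
  _ = _ := hfinal
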